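/- Let D be a set with |D| ≥ 2 and let a, c be distinct elements of D. Define the operation ⊣ on D by: a ⊣ a = a; a ⊣ y = c for y ≠ a; and x ⊣ y = x for x ≠ a. Then ⊣ is associative and right commutative, and a bijection f : D → D is an automorphism of (D,⊣) if and only if f(a) = a and f(c) = c; hence the automorphism group of LOB_D = (D,⊣) is isomorphic to S_{D∖{a,c}}. -/

import Mathlib

/-- A dimonoid: two associative operations `ld` (⊣) and `rd` (⊢) satisfying
axioms (D1), (D2), (D3). -/
def IsDimonoid {D : Type*} (ld rd : D → D → D) : Prop :=
  (∀ x y z, ld (ld x y) z = ld x (ld y z)) ∧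
  (∀ x y z, rd (rd x y) z = rd x (rd y z)) ∧
  (∀ x y z, ld (ld x y) z = ld x (rd y z)) ∧
  (∀ x y z, ld (rd x y) z = rd x (ld y z)) ∧
  (∀ x y z, rd (ld x y) z = rd x (rd y z))

/-- The automorphism group of a magma `(D, op)`, as a subgroup of `Equiv.Perm D`. -/
def semigroupAutGroup {D : Type*} (op : D → D → D) : Subgroup (Equiv.Perm D) where
  carrier := {f : Equiv.Perm D | ∀ x y, f (op x y) = op (f x) (f y)}
  one_mem' := fun _ _ => rfl
  mul_mem' := by
    intro f g hf hg
    simp only [Set.mem_setOf_eq] at hf hg ⊢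
    intro x y
    simp [Equiv.Perm.mul_apply, hg, hf]
  inv_mem' := by
    intro f hf
    simp only [Set.mem_setOf_eq] at hf ⊢
    intro x y
    apply f.injective
    have apply_inv_self : ∀ z, f (f⁻¹ z) = z := fun z => f.apply_symm_apply z
    rw [apply_inv_self, hf, apply_inv_self, apply_inv_self]

/-- The automorphism group of a dimonoid `(D, ld, rd)`. -/
def dimonoidAutGroup {D : Type*} (ld rd : D → D → D) : Subgroup (Equiv.Perm D) :=
  semigroupAutGroup ld ⊓ semigroupAutGroup rd

/-- For distinct `a, c ∈ D`, the semigroup `LOB_D` with `a ⊣ a = a`,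
`a ⊣ y = c` for `y ≠ a`, and `x ⊣ y = x` for `x ≠ a` is associative and right
commutative; its automorphisms are exactly the bijections fixing `a` and `c`,
and its automorphism group is isomorphic to `S_{D∖{a,c}}`. -/
theorem LOB_D_semigroup {D : Type*} (a c : D) (hac : a ≠ c) (ld : D → D → D)
    (hld1 : ld a a = a)
    (hld2 : ∀ y, y ≠ a → ld a y = c)
    (hld3 : ∀ x y, x ≠ a → ld x y = x) :
    (∀ x y z, ld (ld x y) z = ld x (ld y z)) ∧
    (∀ s x y, ld (ld s x) y = ld (ld s y) x) ∧
    (∀ f : Equiv.Perm D,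
      (∀ x y, f (ld x y) = ld (f x) (f y)) ↔ (f a = a ∧ f c = c)) ∧
    Nonempty (↥(semigroupAutGroup ld) ≃* Equiv.Perm ↥(({a, c} : Set D)ᶜ)) := by
  classical
  have hca : c ≠ a := hac.symm
  -- canonical form of ld
  have ldeq : ∀ x y, ld x y = if x = a then (if y = a then a else c) else x := by
    intro x y
    by_cases hx : x = a
    · by_cases hy : y = a
      · simp [hx, hy, hld1]
      · simp [hx, hy, hld2 y hy]
    · simp [hx, hld3 x y hx]
  have assoc : ∀ x y z, ld (ld x y) z = ld x (ld y z) := by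
    intro x y z
    simp only [ldeq]
    split_ifs <;> simp_all
  have rcomm : ∀ s x y, ld (ld s x) y = ld (ld s y) x := by
    intro s x y
    simp only [ldeq]
    split_ifs <;> simp_all
  -- the automorphism characterization
  have hiff : ∀ f : Equiv.Perm D,
      (∀ x y, f (ld x y) = ld (f x) (f y)) ↔ (f a = a ∧ f c = c) := by
    intro f
    constructor
    · intro hf
      have h1 : f c = ld (f a) (f c) := by
        have := hf a c
        rwa [hld2 c hca] at this
      have hfa : f a = a := by
        by_contra h
        rw [hld3 _ _ h] at h1
        exact hca (f.injective h1)
      have hfcne : f c ≠ a := by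
        intro h
        rw [← hfa] at h
        exact hca (f.injective h)
      refine ⟨hfa, ?_⟩
      rw [hfa, hld2 _ hfcne] at h1
      exact h1
    · rintro ⟨hfa, hfc⟩ x y
      have e1 : ∀ z : D, f z = a ↔ z = a := fun z => f.injective.eq_iff' hfa
      simp only [ldeq]
      by_cases hx : x = a
      · by_cases hy : y = a
        · simp [hx, hy, hfa, e1]
        · simp [hx, hy, hfc, e1, hfa]
      · simp [hx, e1, (e1 x).not]
  refine ⟨assoc, rcomm, hiff, ?_⟩
  -- the isomorphism
  have key : ∀ f : Equiv.Perm D, f a = a → f c = c →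
      ∀ x : D, x ∈ (({a, c} : Set D)ᶜ) ↔ f x ∈ (({a, c} : Set D)ᶜ) := by
    intro f hfa hfc x
    simp only [Set.mem_compl_iff, Set.mem_insert_iff, Set.mem_singleton_iff, not_or,
      f.injective.eq_iff' hfa, f.injective.eq_iff' hfc]
  have hfix : ∀ f : Equiv.Perm D, f a = a → f c = c →
      ∀ x : D, x ∉ (({a, c} : Set D)ᶜ) → f x = x := by
    intro f hfa hfc x hx
    simp only [Set.mem_compl_iff, Set.mem_insert_iff, Set.mem_singleton_iff, not_not] at hx
    rcases hx with h | h <;> simp [h, hfa, hfc]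
  have hamem : a ∉ (({a, c} : Set D)ᶜ) := by simp
  have hcmem : c ∉ (({a, c} : Set D)ᶜ) := by simp
  refine ⟨{
      toFun := fun g =>
        Equiv.Perm.subtypePerm g.1
          (fun x => (key g.1 ((hiff g.1).mp g.2).1 ((hiff g.1).mp g.2).2 x).symm)
      invFun := fun e => ⟨e.extendDomain (Equiv.refl _), ?_⟩
      left_inv := ?_
      right_inv := ?_
      map_mul' := ?_ }⟩
  · refine (hiff _).mpr ⟨?_, ?_⟩
    · exact Equiv.Perm.extendDomain_apply_not_subtype e (Equiv.refl _) hamem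
    · exact Equiv.Perm.extendDomain_apply_not_subtype e (Equiv.refl _) hcmem
  · rintro ⟨g, hg⟩
    ext x
    by_cases hx : x ∈ (({a, c} : Set D)ᶜ)
    · simp [Equiv.Perm.extendDomain_apply_subtype _ (Equiv.refl _) hx,
        Equiv.Perm.subtypePerm_apply]
    · rw [Equiv.Perm.extendDomain_apply_not_subtype _ (Equiv.refl _) hx]
      exact (hfix g ((hiff g).mp hg).1 ((hiff g).mp hg).2 x hx).symm
  · intro e
    ext x
    obtain ⟨x, hx⟩ := x
    simp [Equiv.Perm.subtypePerm_apply,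
      Equiv.Perm.extendDomain_apply_subtype _ (Equiv.refl _) hx]
  · intro g h
    ext x
    rfl
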